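/- Let x₁, x₂ be elements of a complex unital Banach algebra A and α ∈ ℂ with α ≠ 0 such that x₁x₂ = α(x₁ + x₂). If x₁ is g-Drazin invertible and x₁ + x₂ is g-Drazin invertible, then x₂ is g-Drazin invertible with x₂^D = (1/α)·(x₁+x₂)^D·x₁. -/

import Mathlib

/-- `b` is a generalized Drazin inverse of `a`: `a` commutes with `b`, `b` is inner-inverse
to itself relative to `a`, and `a * (1 - a * b)` is quasinilpotent (spectral radius zero). -/
def IsGDrazinInverse {A : Type*} [NormedRing A] [NormedAlgebra ℂ A] (a b : A) : Prop :=
  a * b = b * a ∧ b * a * b = b ∧ spectralRadius ℂ (a * (1 - a * b)) = 0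

/-- `a` is generalized Drazin invertible. -/
def GDrazinInvertible {A : Type*} [NormedRing A] [NormedAlgebra ℂ A] (a : A) : Prop :=
  ∃ b : A, IsGDrazinInverse a b

open scoped ENNReal NNReal
open Filter Topology

section Helpers

variable {A : Type*} [NormedRing A] [NormedAlgebra ℂ A] [CompleteSpace A]

set_option linter.unusedSectionVars false

lemma mem_spec_eq_zero {q : A} (hq : spectralRadius ℂ q = 0) {μ : ℂ}
    (hμ : μ ∈ spectrum ℂ q) : μ = 0 := by
  have h : (‖μ‖₊ : ℝ≥0∞) ≤ spectralRadius ℂ q :=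
    le_iSup₂ (f := fun k (_ : k ∈ spectrum ℂ q) => (‖k‖₊ : ℝ≥0∞)) μ hμ
  rw [hq, nonpos_iff_eq_zero] at h
  simpa using h
lemma qn_isUnit_smul_sub {q : A} (hq : spectralRadius ℂ q = 0) {μ : ℂ} (hμ : μ ≠ 0) :
    IsUnit (μ • (1 : A) - q) := by
  have h : μ ∉ spectrum ℂ q := fun h => hμ (mem_spec_eq_zero hq h)
  rw [spectrum.notMem_iff] at h
  rwa [Algebra.algebraMap_eq_smul_one] at h
lemma qn_pow_small {q : A} (hq : spectralRadius ℂ q = 0) {c : ℝ} (hc : 0 < c) :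
    ∃ N : ℕ, 1 ≤ N ∧ ∀ n, N ≤ n → ‖q ^ n‖ ≤ c ^ n := by
  have h := spectrum.pow_nnnorm_pow_one_div_tendsto_nhds_spectralRadius q
  rw [hq] at h
  set c' : ℝ≥0 := Real.toNNReal (min c 1) with hc'
  have hmin : (0:ℝ) < min c 1 := lt_min hc one_pos
  have hc'pos : (0 : ℝ≥0∞) < c' := by
    simpa [hc'] using Real.toNNReal_pos.mpr hmin
  have hev : ∀ᶠ n : ℕ in atTop, (‖q ^ n‖₊ : ℝ≥0∞) ^ (1 / (n : ℝ)) < (c' : ℝ≥0∞) :=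
    h.eventually_lt_const hc'pos
  obtain ⟨N, hN⟩ := eventually_atTop.mp hev
  refine ⟨max N 1, le_max_right _ _, fun n hn => ?_⟩
  have hnN : N ≤ n := le_trans (le_max_left _ _) hn
  have hn1 : 1 ≤ n := le_trans (le_max_right _ _) hn
  have hlt := hN n hnN
  have hne : (n : ℝ) ≠ 0 := by
    simp only [ne_eq, Nat.cast_eq_zero]; omega
  have hx : (‖q ^ n‖₊ : ℝ≥0∞) ≤ (c' : ℝ≥0∞) ^ (n : ℝ) := by
    have h1 : ((‖q ^ n‖₊ : ℝ≥0∞) ^ (1 / (n:ℝ))) ^ (n:ℝ) ≤ (c' : ℝ≥0∞) ^ (n:ℝ) :=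
      ENNReal.rpow_le_rpow hlt.le (Nat.cast_nonneg n)
    rwa [← ENNReal.rpow_mul, one_div, inv_mul_cancel₀ hne, ENNReal.rpow_one] at h1
  rw [ENNReal.rpow_natCast, ← ENNReal.coe_pow, ENNReal.coe_le_coe] at hx
  have hxr : ‖q ^ n‖ ≤ ((c' ^ n : ℝ≥0) : ℝ) := hx
  refine hxr.trans ?_
  have : ((c' ^ n : ℝ≥0) : ℝ) = (min c 1) ^ n := by
    push_cast
    rw [Real.coe_toNNReal _ hmin.le]
  rw [this]
  exact pow_le_pow_left₀ hmin.le (min_le_left _ _) n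
lemma qn_mul_left {x q : A} (hcomm : x * q = q * x) (hq : spectralRadius ℂ q = 0) :
    spectralRadius ℂ (x * q) = 0 := by
  refine le_antisymm ?_ (zero_le)
  have key : ∀ ε : ℝ≥0, 0 < ε → spectralRadius ℂ (x * q) ≤ (ε : ℝ≥0∞) := by
    intro ε hε
    refine (spectrum.spectralRadius_le_liminf_pow_nnnorm_pow_one_div ℂ (x*q)).trans ?_
    refine liminf_le_of_frequently_le' ?_
    have hx1 : (0:ℝ) < ‖x‖ + 1 := by positivity
    have hc : (0:ℝ) < (ε : ℝ) / (‖x‖ + 1) := by positivity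
    obtain ⟨N, hN1, hN⟩ := qn_pow_small hq hc
    apply Filter.Eventually.frequently
    filter_upwards [eventually_ge_atTop N] with n hn
    have hn1 : 1 ≤ n := le_trans hN1 hn
    have hne : (n : ℝ) ≠ 0 := by simp only [ne_eq, Nat.cast_eq_zero]; omega
    have hxq : (x*q)^n = x^n * q^n := (Commute.mul_pow hcomm n)
    have hb : ‖(x*q)^n‖ ≤ (ε:ℝ)^n := by
      rw [hxq]
      calc ‖x^n * q^n‖ ≤ ‖x^n‖ * ‖q^n‖ := norm_mul_le _ _
        _ ≤ ‖x‖^n * ((ε : ℝ) / (‖x‖ + 1))^n := by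
            apply mul_le_mul (norm_pow_le' x (by omega)) (hN n hn) (norm_nonneg _)
              (pow_nonneg (norm_nonneg _) n)
        _ ≤ (‖x‖+1)^n * ((ε : ℝ) / (‖x‖ + 1))^n := by
            apply mul_le_mul_of_nonneg_right
              (pow_le_pow_left₀ (norm_nonneg _) (by linarith) n)
              (pow_nonneg hc.le n)
        _ = (ε:ℝ)^n := by
            rw [← mul_pow, mul_div_cancel₀ _ (ne_of_gt hx1)]
    have hbn : ‖(x*q)^n‖₊ ≤ ε ^ n := by
      have : ((‖(x*q)^n‖₊ : ℝ)) ≤ ((ε ^ n : ℝ≥0) : ℝ) := by push_cast; exact hb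
      exact_mod_cast this
    calc (‖(x*q)^n‖₊ : ℝ≥0∞) ^ (1/(n:ℝ)) ≤ ((ε:ℝ≥0∞)^(n:ℕ)) ^ (1/(n:ℝ)) := by
          apply ENNReal.rpow_le_rpow _ (by positivity)
          exact_mod_cast hbn
      _ = (ε : ℝ≥0∞) := by
          rw [← ENNReal.rpow_natCast (ε : ℝ≥0∞) n, ← ENNReal.rpow_mul,
            mul_one_div, div_self hne, ENNReal.rpow_one]
  exact ENNReal.le_of_forall_pos_le_add fun ε hε _ => by simpa using key ε hε
lemma qn_swap (x y : A) : spectralRadius ℂ (x * y) = spectralRadius ℂ (y * x) := by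
  have key : ∀ u v : A, spectralRadius ℂ (u * v) ≤ spectralRadius ℂ (v * u) := by
    intro u v
    refine iSup₂_le fun μ hμ => ?_
    rcases eq_or_ne μ 0 with rfl | hμ0
    · simp
    · have : μ ∈ spectrum ℂ (v * u) := by
        have := (spectrum.unit_mem_mul_comm
          (a := u) (b := v) (r := Units.mk0 μ hμ0)).mp (by simpa using hμ)
        simpa using this
      exact le_iSup₂ (f := fun k (_ : k ∈ spectrum ℂ (v*u)) => (‖k‖₊ : ℝ≥0∞)) μ this
  exact le_antisymm (key x y) (key y x)

lemma aux_zero {z g : A} {M : ℝ} (hM : 0 ≤ M) (hg : spectralRadius ℂ g = 0)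
    (h : ∀ n, 1 ≤ n → ‖z‖ ≤ ‖g ^ n‖ * M ^ n) : z = 0 := by
  have hc : (0:ℝ) < (2*(M+1))⁻¹ := by positivity
  obtain ⟨N, hN1, hN⟩ := qn_pow_small hg hc
  have key : ∀ n, N ≤ n → ‖z‖ ≤ (1/2:ℝ)^n := by
    intro n hn
    have h1 := h n (le_trans hN1 hn)
    have h2 : ‖g^n‖ * M^n ≤ ((2*(M+1))⁻¹)^n * M^n :=
      mul_le_mul_of_nonneg_right (hN n hn) (pow_nonneg hM n)
    have h3 : ((2*(M+1))⁻¹)^n * M^n = (M/(2*(M+1)))^n := by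
      rw [← mul_pow]; congr 1; field_simp
    have h4 : M/(2*(M+1)) ≤ 1/2 := by
      rw [div_le_div_iff₀ (by positivity) (by norm_num)]; nlinarith
    calc ‖z‖ ≤ ((2*(M+1))⁻¹)^n * M^n := le_trans h1 h2
      _ = (M/(2*(M+1)))^n := h3
      _ ≤ (1/2:ℝ)^n := pow_le_pow_left₀ (by positivity) h4 n
  have ht : Tendsto (fun n : ℕ => (1/2:ℝ)^n) atTop (𝓝 0) :=
    tendsto_pow_atTop_nhds_zero_of_lt_one (by norm_num) (by norm_num)
  have hz : ‖z‖ ≤ 0 := ge_of_tendsto ht (eventually_atTop.mpr ⟨N, key⟩)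
  exact norm_le_zero_iff.mp hz

end Helpers

theorem stmt_5 {A : Type*} [NormedRing A] [NormedAlgebra ℂ A] [CompleteSpace A]
    (x₁ x₂ b₁ s : A) (α : ℂ) (hα : α ≠ 0) (h12 : x₁ * x₂ = α • (x₁ + x₂))
    (h1 : IsGDrazinInverse x₁ b₁) (hs : IsGDrazinInverse (x₁ + x₂) s) :
    IsGDrazinInverse x₂ (α⁻¹ • (s * x₁)) := by
  obtain ⟨y, hy⟩ : ∃ y : A, y = x₁ + x₂ := ⟨_, rfl⟩
  obtain ⟨hc1, hc2, hc3⟩ := h1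
  have hs1 : y * s = s * y := by rw [hy]; exact hs.1
  have hs2 : s * y * s = s := by rw [hy]; exact hs.2.1
  have hs3 : spectralRadius ℂ (y * (1 - y * s)) = 0 := by rw [hy]; exact hs.2.2.symm ▸ hs.2.2
  have h12' : x₁ * x₂ = α • y := by rw [hy]; exact h12
  obtain ⟨π, hπ⟩ : ∃ π : A, π = x₁ * b₁ := ⟨_, rfl⟩
  have hπ' : π = b₁ * x₁ := by rw [hπ, hc1]
  obtain ⟨f, hf⟩ : ∃ f : A, f = 1 - π := ⟨_, rfl⟩
  obtain ⟨q, hqd⟩ : ∃ q : A, q = x₁ * f := ⟨_, rfl⟩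
  -- basic facts
  have hππ : π * π = π := by
    calc π * π = x₁ * (b₁ * x₁ * b₁) := by rw [hπ]; noncomm_ring
    _ = π := by rw [hc2, hπ]
  have hπa : π * x₁ = x₁ * π := by
    calc π * x₁ = x₁ * (b₁ * x₁) := by rw [hπ, mul_assoc]
    _ = x₁ * π := by rw [← hc1, ← hπ]
  have hπK : π * b₁ = b₁ := by rw [hπ']; exact hc2
  have hKπ : b₁ * π = b₁ := by rw [hπ, ← mul_assoc]; exact hc2
  have hfπ : f * π = 0 := by rw [hf, sub_mul, one_mul, hππ, sub_self]
  have hπf : π * f = 0 := by rw [hf, mul_sub, mul_one, hππ, sub_self]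
  have hff : f * f = f := by
    rw [hf, show (1 - π) * (1 - π) = 1 - π - π + π * π from by noncomm_ring, hππ]
    abel
  have hfa : f * x₁ = x₁ * f := by rw [hf, sub_mul, one_mul, mul_sub, mul_one, hπa]
  have hqf : q * f = q := by rw [hqd, mul_assoc, hff]
  have hfq : f * q = q := by rw [hqd, ← mul_assoc, hfa, mul_assoc, hff]
  have hqπ : q * π = 0 := by rw [hqd, mul_assoc, hfπ, mul_zero]
  have hπq : π * q = 0 := by rw [hqd, ← mul_assoc, hπa, mul_assoc, hπf, mul_zero]
  have hq0 : spectralRadius ℂ q = 0 := by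
    have e : x₁ * (1 - x₁ * b₁) = q := by rw [hqd, hf, hπ]
    rwa [e] at hc3
  -- resolvent of q at α
  have hWu : IsUnit (α • (1:A) - q) := qn_isUnit_smul_sub hq0 hα
  obtain ⟨R, hWR, hRW⟩ : ∃ R : A, (α • (1:A) - q) * R = 1 ∧ R * (α • (1:A) - q) = 1 :=
    ⟨↑hWu.unit⁻¹, hWu.mul_val_inv, hWu.val_inv_mul⟩
  have hRq : R * q = q * R := by
    have hWq : (α • (1:A) - q) * q = q * (α • (1:A) - q) := by
      simp only [sub_mul, mul_sub, smul_mul_assoc, mul_smul_comm, one_mul, mul_one]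
    calc R * q = R * q * ((α • (1:A) - q) * R) := by rw [hWR, mul_one]
    _ = R * (q * (α • (1:A) - q)) * R := by noncomm_ring
    _ = R * ((α • (1:A) - q) * q) * R := by rw [hWq]
    _ = (R * (α • (1:A) - q)) * (q * R) := by noncomm_ring
    _ = q * R := by rw [hRW, one_mul]
  -- key relation
  have hq_x2 : q * x₂ = α • q + α • (f * x₂) := by
    calc q * x₂ = f * (x₁ * x₂) := by rw [hqd, ← mul_assoc, hfa]
    _ = α • (f * x₁) + α • (f * x₂) := by rw [h12', hy, mul_smul_comm, mul_add, smul_add]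
    _ = α • q + α • (f * x₂) := by rw [hfa, ← hqd]
  -- triangularity
  have hX0 : f * x₂ * π = 0 := by
    have e1 : q * (f * x₂ * π) = α • (f * x₂ * π) := by
      calc q * (f * x₂ * π) = (q * x₂) * π := by
            rw [show q * (f * x₂ * π) = (q * f) * x₂ * π from by noncomm_ring, hqf]
      _ = α • (q * π) + α • (f * x₂ * π) := by
            rw [hq_x2, add_mul, smul_mul_assoc, smul_mul_assoc]
      _ = α • (f * x₂ * π) := by rw [hqπ, smul_zero, zero_add]
    have e2 : (α • (1:A) - q) * (f * x₂ * π) = 0 := by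
      rw [sub_mul, e1, smul_mul_assoc, one_mul, sub_self]
    calc f * x₂ * π = (R * (α • (1:A) - q)) * (f * x₂ * π) := by rw [hRW, one_mul]
    _ = R * ((α • (1:A) - q) * (f * x₂ * π)) := by rw [mul_assoc]
    _ = 0 := by rw [e2, mul_zero]
  have hfaπ : f * x₁ * π = 0 := by rw [hfa, mul_assoc, hfπ, mul_zero]
  have hfyπ : f * y * π = 0 := by
    rw [hy, mul_add, add_mul, hfaπ, hX0, add_zero]
  -- beta
  obtain ⟨β, hβ⟩ : ∃ β : A, β = f * x₂ * f := ⟨_, rfl⟩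
  have hqβ : q * β = α • q + α • β := by
    calc q * β = (q * x₂) * f := by
          rw [hβ, show q * (f * x₂ * f) = (q * f) * x₂ * f from by noncomm_ring, hqf]
    _ = α • (q * f) + α • (f * x₂ * f) := by rw [hq_x2, add_mul, smul_mul_assoc, smul_mul_assoc]
    _ = α • q + α • β := by rw [hqf, ← hβ]
  have hβR : β = (-α) • (R * q) := by
    have e1 : (α • (1:A) - q) * β = (-α) • q := by
      rw [sub_mul, smul_mul_assoc, one_mul, hqβ, neg_smul]
      abel
    calc β = (R * (α • (1:A) - q)) * β := by rw [hRW, one_mul]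
    _ = R * ((α • (1:A) - q) * β) := by rw [mul_assoc]
    _ = (-α) • (R * q) := by rw [e1, mul_smul_comm]
  have hβqn : spectralRadius ℂ β = 0 := by
    rw [hβR, ← smul_mul_assoc]
    exact qn_mul_left (by rw [smul_mul_assoc, mul_smul_comm, hRq]) hq0
  have hfb : f * x₂ = β := by
    have e : f * x₂ * π + f * x₂ * f = f * x₂ := by
      rw [← mul_add, hf, add_sub_cancel, mul_one]
    rw [← e, hX0, zero_add, hβ]
  have hβf : β * f = β := by rw [hβ, mul_assoc, hff]
  -- gamma
  obtain ⟨γ, hγ⟩ : ∃ γ : A, γ = f * y := ⟨_, rfl⟩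
  have hγqb : γ = q + β := by rw [hγ, hy, mul_add, hfa, ← hqd, hfb]
  have hγf : γ * f = γ := by rw [hγqb, add_mul, hqf, hβf]
  have hγqn : spectralRadius ℂ γ = 0 := by
    have e : γ = (1 - α • R) * q := by
      rw [hγqb, hβR, sub_mul, one_mul, smul_mul_assoc, neg_smul, ← sub_eq_add_neg]
    rw [e]
    refine qn_mul_left ?_ hq0
    rw [sub_mul, mul_sub, one_mul, mul_one, smul_mul_assoc, mul_smul_comm, hRq]
  -- p := y * s
  obtain ⟨p, hp⟩ : ∃ p : A, p = y * s := ⟨_, rfl⟩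
  have hpp : p * p = p := by
    calc p * p = y * (s * y * s) := by rw [hp]; noncomm_ring
    _ = p := by rw [hs2, hp]
  have hpy : p * y = y * p := by
    calc p * y = y * (s * y) := by rw [hp, mul_assoc]
    _ = y * p := by rw [← hs1, ← hp]
  have hypow : ∀ n, 1 ≤ n → y ^ n * s ^ n = p := by
    intro n hn
    induction n with
    | zero => omega
    | succ m ih =>
      rcases Nat.eq_or_lt_of_le hn with h | h
      · simp only [← h, pow_one]; rw [hp]
      · have hm : 1 ≤ m := by omega
        have ihm := ih hm
        have hcy : Commute y p := hpy.symm
        calc y ^ (m+1) * s ^ (m+1) = (y ^ m * y) * (s * s ^ m) := by rw [pow_succ, pow_succ']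
        _ = y ^ m * (y * s) * s ^ m := by noncomm_ring
        _ = y ^ m * p * s ^ m := by rw [← hp]
        _ = p * (y ^ m * s ^ m) := by rw [(hcy.pow_left m).eq]; noncomm_ring
        _ = p := by rw [ihm, hpp]
  have hfyn : ∀ n, 1 ≤ n → f * y ^ n = γ ^ n := by
    intro n hn
    induction n with
    | zero => omega
    | succ m ih =>
      rcases Nat.eq_or_lt_of_le hn with h | h
      · simp only [← h, pow_one]; rw [hγ]
      · have hm : 1 ≤ m := by omega
        calc f * y ^ (m+1) = (f * y) * y ^ m := by rw [pow_succ']; noncomm_ring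
        _ = (γ * f) * y ^ m := by rw [← hγ, hγf]
        _ = γ * (f * y ^ m) := by rw [mul_assoc]
        _ = γ * γ ^ m := by rw [ih hm]
        _ = γ ^ (m+1) := by rw [pow_succ']
  -- f * p = 0
  have hfp : f * p = 0 := by
    refine aux_zero (norm_nonneg s) hγqn (fun n hn => ?_)
    have e : f * p = γ ^ n * s ^ n := by
      rw [← hypow n hn, ← mul_assoc, hfyn n hn]
    rw [e]
    calc ‖γ ^ n * s ^ n‖ ≤ ‖γ ^ n‖ * ‖s ^ n‖ := norm_mul_le _ _
    _ ≤ ‖γ ^ n‖ * ‖s‖ ^ n :=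
        mul_le_mul_of_nonneg_left (norm_pow_le' s (by omega)) (norm_nonneg _)
  -- L
  obtain ⟨L, hL⟩ : ∃ L : A, L = b₁ * b₁ * (x₁ - α • 1) := ⟨_, rfl⟩
  have hx1y : x₁ * y = x₁ * x₁ + α • y := by
    rw [hy, mul_add, h12', ← hy]
  have hay : (x₁ - α • (1:A)) * y = x₁ * x₁ := by
    rw [sub_mul, smul_mul_assoc, one_mul, hx1y]; abel
  have hKKaa : b₁ * b₁ * (x₁ * x₁) = π := by
    calc b₁ * b₁ * (x₁ * x₁) = b₁ * (b₁ * x₁) * x₁ := by noncomm_ring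
    _ = b₁ * (x₁ * b₁) * x₁ := by rw [← hc1]
    _ = (b₁ * x₁ * b₁) * x₁ := by noncomm_ring
    _ = b₁ * x₁ := by rw [hc2]
    _ = π := hπ'.symm
  have hLy : L * y = π := by
    calc L * y = b₁ * b₁ * ((x₁ - α • 1) * y) := by rw [hL, mul_assoc]
    _ = π := by rw [hay, hKKaa]
  have hLπ : L * π = L := by
    have e1 : b₁ * b₁ * π = b₁ * b₁ := by rw [mul_assoc, hKπ]
    calc L * π = b₁ * b₁ * (x₁ * π) - α • (b₁ * b₁ * π) := by
          rw [hL]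
          simp only [sub_mul, mul_sub, smul_mul_assoc, mul_smul_comm, one_mul, mul_one, mul_assoc]
    _ = b₁ * b₁ * (π * x₁) - α • (b₁ * b₁) := by rw [hπa, e1]
    _ = (b₁ * b₁ * π) * x₁ - α • (b₁ * b₁) := by noncomm_ring
    _ = b₁ * b₁ * x₁ - α • (b₁ * b₁) := by rw [e1]
    _ = L := by rw [hL]; simp only [mul_sub, mul_smul_comm, mul_one, mul_assoc]
  have hLπn : ∀ n, 1 ≤ n → L ^ n * π = L ^ n := by
    intro n hn
    induction n with
    | zero => omega
    | succ m _ =>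
      calc L ^ (m+1) * π = L ^ m * (L * π) := by rw [pow_succ, mul_assoc]
      _ = L ^ (m+1) := by rw [hLπ, pow_succ]
  have hLyn : ∀ n, 1 ≤ n → L ^ n * y ^ n = π := by
    intro n hn
    induction n with
    | zero => omega
    | succ m ih =>
      rcases Nat.eq_or_lt_of_le hn with h | h
      · simp only [← h, pow_one]; exact hLy
      · have hm : 1 ≤ m := by omega
        calc L ^ (m+1) * y ^ (m+1) = L ^ m * (L * y) * y ^ m := by
              rw [pow_succ, pow_succ']; noncomm_ring
        _ = (L ^ m * π) * y ^ m := by rw [hLy]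
        _ = L ^ m * y ^ m := by rw [hLπn m hm]
        _ = π := ih hm
  -- π * (1 - p) = 0
  have hqy3 : spectralRadius ℂ (y * (1 - p)) = 0 := by rw [hp]; exact hs3
  have h1p : (1 - p) * (1 - p) = 1 - p := by
    rw [show ((1:A) - p) * (1 - p) = 1 - p - p + p * p from by noncomm_ring, hpp]; abel
  have hy1p : Commute y (1 - p) := by
    unfold Commute SemiconjBy
    simp only [mul_sub, sub_mul, mul_one, one_mul, hpy]
  have h1pn : ∀ n, 1 ≤ n → ((1:A) - p) ^ n = 1 - p := by
    intro n hn
    induction n with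
    | zero => omega
    | succ m ih =>
      rcases Nat.eq_or_lt_of_le hn with h | h
      · simp only [← h, pow_one]
      · have hm : 1 ≤ m := by omega
        rw [pow_succ, ih hm, h1p]
  have hπ1p : π * (1 - p) = 0 := by
    refine aux_zero (norm_nonneg L) hqy3 (fun n hn => ?_)
    have e : π * (1 - p) = L ^ n * (y * (1 - p)) ^ n := by
      rw [hy1p.mul_pow, h1pn n hn, ← mul_assoc, hLyn n hn]
    rw [e, mul_comm (‖(y * (1 - p)) ^ n‖)]
    calc ‖L ^ n * (y * (1 - p)) ^ n‖ ≤ ‖L ^ n‖ * ‖(y * (1 - p)) ^ n‖ := norm_mul_le _ _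
    _ ≤ ‖L‖ ^ n * ‖(y * (1 - p)) ^ n‖ :=
        mul_le_mul_of_nonneg_right (norm_pow_le' L (by omega)) (norm_nonneg _)
  -- p = π
  have hpπ : p = π := by
    have e1 : π * p = π := by
      have h' := hπ1p
      rw [mul_sub, mul_one, sub_eq_zero] at h'
      exact h'.symm
    have e2 : p = π * p + f * p := by
      rw [hf, sub_mul, one_mul]; abel
    rw [e2, e1, hfp, add_zero]
  -- consequences of p = π
  have hysπ : y * s = π := hp.symm.trans hpπ
  have hsyπ : s * y = π := by rw [← hs1]; exact hysπ
  have hπs : π * s = s := by rw [← hsyπ]; exact hs2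
  have hsπ : s * π = s := by rw [← hysπ, ← mul_assoc]; exact hs2
  have hπ_f : π + f = 1 := by rw [hf]; abel
  have hx2π : x₂ * π = π * x₂ * π := by
    calc x₂ * π = (π + f) * (x₂ * π) := by rw [hπ_f, one_mul]
    _ = π * x₂ * π + f * x₂ * π := by rw [add_mul, ← mul_assoc, ← mul_assoc]
    _ = π * x₂ * π := by rw [hX0, add_zero]
  have hsy1 : s * (π * y * π) = π := by
    calc s * (π * y * π) = (s * π) * (y * π) := by noncomm_ring
    _ = (s * y) * π := by rw [hsπ, ← mul_assoc]
    _ = π := by rw [hsyπ, hππ]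
  have hy1s : (π * y * π) * s = π := by
    calc (π * y * π) * s = (π * y) * (π * s) := by noncomm_ring
    _ = π * (y * s) := by rw [hπs, mul_assoc]
    _ = π := by rw [hysπ, hππ]
  have hπaa : π * (x₁ * x₁) = x₁ * x₁ * π := by
    calc π * (x₁ * x₁) = (π * x₁) * x₁ := (mul_assoc _ _ _).symm
    _ = (x₁ * π) * x₁ := by rw [hπa]
    _ = x₁ * (π * x₁) := by rw [mul_assoc]
    _ = x₁ * (x₁ * π) := by rw [hπa]
    _ = x₁ * x₁ * π := by rw [← mul_assoc]
  have hu1 : (x₁ * π - α • π) * (y * π) = x₁ * x₁ * π := by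
    calc (x₁ * π - α • π) * (y * π) = (π * x₁ - α • π) * (y * π) := by rw [hπa]
    _ = π * ((x₁ - α • (1:A)) * y) * π := by
        simp only [sub_mul, mul_sub, smul_mul_assoc, mul_smul_comm, one_mul, mul_one, mul_assoc]
    _ = π * (x₁ * x₁) * π := by rw [hay]
    _ = x₁ * x₁ * (π * π) := by rw [hπaa, mul_assoc]
    _ = x₁ * x₁ * π := by rw [hππ]
  have hyπs : (y * π) * s = π := by rw [mul_assoc, hπs, hysπ]
  have hu : x₁ * π - α • π = x₁ * x₁ * s := by
    calc x₁ * π - α • π = (x₁ * π - α • π) * π := by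
          rw [sub_mul, mul_assoc, hππ, smul_mul_assoc, hππ]
    _ = (x₁ * π - α • π) * ((y * π) * s) := by rw [hyπs]
    _ = ((x₁ * π - α • π) * (y * π)) * s := by rw [← mul_assoc]
    _ = (x₁ * x₁ * π) * s := by rw [hu1]
    _ = x₁ * x₁ * s := by rw [mul_assoc, hπs]
  have hKKπ : b₁ * b₁ * π = b₁ * b₁ := by rw [mul_assoc, hKπ]
  have hxxKK : (x₁ * x₁) * (π * (b₁ * b₁)) = π := by
    have e1 : π * (b₁ * b₁) = b₁ * b₁ := by rw [← mul_assoc, hπK]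
    rw [e1]
    calc (x₁ * x₁) * (b₁ * b₁) = x₁ * ((x₁ * b₁) * b₁) := by noncomm_ring
    _ = x₁ * (π * b₁) := by rw [← hπ]
    _ = x₁ * b₁ := by rw [hπK]
    _ = π := hπ.symm
  have hum : (x₁ * π - α • π) * (π * y * (b₁ * b₁)) = π := by
    rw [hu]
    calc (x₁ * x₁ * s) * (π * y * (b₁ * b₁)) = (x₁ * x₁) * ((s * π) * (y * (b₁ * b₁))) := by
          noncomm_ring
    _ = (x₁ * x₁) * ((s * y) * (b₁ * b₁)) := by rw [hsπ, ← mul_assoc s y (b₁ * b₁)]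
    _ = (x₁ * x₁) * (π * (b₁ * b₁)) := by rw [hsyπ]
    _ = π := hxxKK
  have hmu : (π * y * (b₁ * b₁)) * (x₁ * π - α • π) = π := by
    rw [hu]
    calc (π * y * (b₁ * b₁)) * (x₁ * x₁ * s) = (π * y) * ((b₁ * b₁) * (x₁ * x₁)) * s := by
          noncomm_ring
    _ = (π * y) * π * s := by rw [hKKaa]
    _ = (π * y) * (π * s) := by rw [mul_assoc]
    _ = π * (y * s) := by rw [hπs, mul_assoc]
    _ = π := by rw [hysπ, hππ]
  have hglob : (x₁ - α • (1:A)) * (x₂ - α • (1:A)) = (α * α) • (1:A) := by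
    have e : (x₁ - α • (1:A)) * (x₂ - α • (1:A))
        = x₁ * x₂ - α • x₁ - α • x₂ + (α * α) • 1 := by
      simp only [mul_sub, sub_mul, mul_smul_comm, smul_mul_assoc, mul_one, one_mul, smul_smul,
        smul_sub]
      abel
    rw [e, h12', hy, smul_add]
    abel
  have huv : (x₁ * π - α • π) * (π * x₂ * π - α • π) = (α * α) • π := by
    have e1 : x₁ * π - α • π = π * (x₁ - α • (1:A)) := by
      rw [mul_sub, mul_smul_comm, mul_one, hπa]
    have e2 : π * x₂ * π - α • π = (x₂ - α • (1:A)) * π := by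
      rw [sub_mul, smul_mul_assoc, one_mul, hx2π]
    calc (x₁ * π - α • π) * (π * x₂ * π - α • π)
        = (π * (x₁ - α • (1:A))) * ((x₂ - α • (1:A)) * π) := by rw [e1, e2]
    _ = π * ((x₁ - α • (1:A)) * (x₂ - α • (1:A))) * π := by noncomm_ring
    _ = π * ((α * α) • (1:A)) * π := by rw [hglob]
    _ = (α * α) • π := by rw [mul_smul_comm, mul_one, smul_mul_assoc, hππ]
  have hmπ : (π * y * (b₁ * b₁)) * π = π * y * (b₁ * b₁) := by
    calc (π * y * (b₁ * b₁)) * π = π * y * ((b₁ * b₁) * π) := by noncomm_ring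
    _ = π * y * (b₁ * b₁) := by rw [hKKπ]
  have hπv : π * (π * x₂ * π - α • π) = π * x₂ * π - α • π := by
    have e1 : π * (π * x₂ * π) = π * x₂ * π := by
      rw [show π * (π * x₂ * π) = (π * π) * x₂ * π from by noncomm_ring, hππ]
    rw [mul_sub, mul_smul_comm, hππ, e1]
  have hv : π * x₂ * π - α • π = (α * α) • (π * y * (b₁ * b₁)) := by
    calc π * x₂ * π - α • π = π * (π * x₂ * π - α • π) := hπv.symm
    _ = ((π * y * (b₁ * b₁)) * (x₁ * π - α • π)) * (π * x₂ * π - α • π) := by rw [hmu]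
    _ = (π * y * (b₁ * b₁)) * ((x₁ * π - α • π) * (π * x₂ * π - α • π)) := by rw [mul_assoc]
    _ = (π * y * (b₁ * b₁)) * ((α * α) • π) := by rw [huv]
    _ = (α * α) • ((π * y * (b₁ * b₁)) * π) := by rw [mul_smul_comm]
    _ = (α * α) • (π * y * (b₁ * b₁)) := by rw [hmπ]
  have hvu : (π * x₂ * π - α • π) * (x₁ * π - α • π) = (α * α) • π := by
    rw [hv, smul_mul_assoc, hmu]
  have hba : (π * x₂ * π) * (x₁ * π) = α • (π * x₂ * π) + α • (x₁ * π) := by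
    have ev'π : (π * x₂ * π) * π = π * x₂ * π := by rw [mul_assoc, hππ]
    have eπu' : π * (x₁ * π) = x₁ * π := by
      rw [show π * (x₁ * π) = (π * x₁) * π from by rw [mul_assoc], hπa, mul_assoc, hππ]
    have expand : (π * x₂ * π - α • π) * (x₁ * π - α • π)
        = (π * x₂ * π) * (x₁ * π) - α • (π * x₂ * π) - α • (x₁ * π) + (α * α) • π := by
      simp only [sub_mul, mul_sub, smul_mul_assoc, mul_smul_comm, smul_smul, smul_sub]
      rw [ev'π, eπu', hππ]
      abel
    have h0 := hvu
    rw [expand] at h0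
    have h2 : (π * x₂ * π) * (x₁ * π) - α • (π * x₂ * π) - α • (x₁ * π) = 0 := by
      have h3 : ((π * x₂ * π) * (x₁ * π) - α • (π * x₂ * π) - α • (x₁ * π)) + (α * α) • π
          = 0 + (α * α) • π := by rw [h0, zero_add]
      exact add_right_cancel h3
    rw [sub_sub] at h2
    exact sub_eq_zero.mp h2
  have hab1 : (x₁ * π) * (π * x₂ * π) = α • (π * y * π) := by
    calc (x₁ * π) * (π * x₂ * π) = x₁ * π * (x₂ * π) := by
          rw [show (x₁ * π) * (π * x₂ * π) = x₁ * (π * π) * (x₂ * π) from by noncomm_ring, hππ]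
    _ = (π * x₁) * (x₂ * π) := by rw [hπa]
    _ = π * (x₁ * x₂) * π := by noncomm_ring
    _ = π * (α • y) * π := by rw [h12']
    _ = α • (π * y * π) := by rw [mul_smul_comm, smul_mul_assoc]
  have hyπd : π * y * π = x₁ * π + π * x₂ * π := by
    have e1 : π * x₁ * π = x₁ * π := by rw [hπa, mul_assoc, hππ]
    calc π * y * π = π * x₁ * π + π * x₂ * π := by rw [hy, mul_add, add_mul]
    _ = x₁ * π + π * x₂ * π := by rw [e1]
  have hcomm11 : (π * y * π) * (π * x₂ * π) = (π * x₂ * π) * (π * y * π) := by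
    calc (π * y * π) * (π * x₂ * π)
        = (x₁ * π) * (π * x₂ * π) + (π * x₂ * π) * (π * x₂ * π) := by rw [hyπd, add_mul]
    _ = (α • (π * x₂ * π) + α • (x₁ * π)) + (π * x₂ * π) * (π * x₂ * π) := by
        rw [hab1, hyπd, smul_add]
        abel
    _ = (π * x₂ * π) * (x₁ * π) + (π * x₂ * π) * (π * x₂ * π) := by rw [hba]
    _ = (π * x₂ * π) * (π * y * π) := by rw [hyπd, mul_add]
  have hsb : s * (π * x₂ * π) = (π * x₂ * π) * s := by
    have eb11π : (π * x₂ * π) * π = π * x₂ * π := by rw [mul_assoc, hππ]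
    have eπb11 : π * (π * x₂ * π) = π * x₂ * π := by
      rw [show π * (π * x₂ * π) = (π * π) * x₂ * π from by noncomm_ring, hππ]
    calc s * (π * x₂ * π) = s * ((π * x₂ * π) * ((π * y * π) * s)) := by rw [hy1s, eb11π]
    _ = (s * ((π * x₂ * π) * (π * y * π))) * s := by noncomm_ring
    _ = (s * ((π * y * π) * (π * x₂ * π))) * s := by rw [hcomm11]
    _ = ((s * (π * y * π)) * (π * x₂ * π)) * s := by noncomm_ring
    _ = (π * (π * x₂ * π)) * s := by rw [hsy1]
    _ = (π * x₂ * π) * s := by rw [eπb11]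
  have hbsa : x₂ * (s * x₁) = α • π := by
    have ex2s : x₂ * s = (π * x₂ * π) * s := by
      calc x₂ * s = x₂ * (π * s) := by rw [hπs]
      _ = (x₂ * π) * s := by rw [mul_assoc]
      _ = (π * x₂ * π) * s := by rw [hx2π]
    have esx1 : s * x₁ = s * (x₁ * π) := by
      calc s * x₁ = (s * π) * x₁ := by rw [hsπ]
      _ = s * (π * x₁) := by rw [mul_assoc]
      _ = s * (x₁ * π) := by rw [hπa]
    calc x₂ * (s * x₁) = (x₂ * s) * (x₁ * π) := by rw [esx1, ← mul_assoc]
    _ = ((π * x₂ * π) * s) * (x₁ * π) := by rw [ex2s]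
    _ = (s * (π * x₂ * π)) * (x₁ * π) := by rw [hsb]
    _ = s * ((π * x₂ * π) * (x₁ * π)) := by rw [mul_assoc]
    _ = s * (α • (π * x₂ * π) + α • (x₁ * π)) := by rw [hba]
    _ = α • (s * (π * y * π)) := by
        rw [mul_add, mul_smul_comm, mul_smul_comm, ← smul_add, ← mul_add, hyπd, add_comm]
    _ = α • π := by rw [hsy1]
  -- conclusion
  have hbt : x₂ * (α⁻¹ • (s * x₁)) = π := by
    rw [mul_smul_comm, hbsa, smul_smul, inv_mul_cancel₀ hα, one_smul]
  have htb : (α⁻¹ • (s * x₁)) * x₂ = π := by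
    rw [smul_mul_assoc, mul_assoc, h12', mul_smul_comm, smul_smul, inv_mul_cancel₀ hα,
      one_smul, hsyπ]
  refine ⟨?_, ?_, ?_⟩
  · rw [hbt, htb]
  · calc (α⁻¹ • (s * x₁)) * x₂ * (α⁻¹ • (s * x₁)) = π * (α⁻¹ • (s * x₁)) := by rw [htb]
    _ = α⁻¹ • (s * x₁) := by rw [mul_smul_comm, ← mul_assoc, hπs]
  · rw [hbt, ← hf, qn_swap, hfb]
    exact hβqn
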